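/- Let k ≥ 3 be an integer and let h be a C² real-valued function on an open set Ω ⊂ ℝ² satisfying Δh = 2k·h and 0 ≤ h ≤ 4/(k−2) on Ω. Then the function v := h − ((k−2)/2)h² satisfies Δv − 2k·v + k(k−2)v² ≤ 0 on Ω, i.e. v is a supersolution of the equation Δu = 2k·u − k(k−2)u². Moreover one has the identity Δv − 2k·v + k(k−2)v² = −k(k−2)²h³ + (1/4)k(k−2)³h⁴ − (k−2)|∇h|². -/

import Mathlib

/-- The Euclidean Laplacian of `f : ℝ × ℝ → ℝ` at `p`, computed as the sum of the
second derivatives along the two coordinate directions. -/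
noncomputable def lap2 (f : ℝ × ℝ → ℝ) (p : ℝ × ℝ) : ℝ :=
  deriv (deriv (fun t : ℝ => f (p.1 + t, p.2))) 0 +
  deriv (deriv (fun t : ℝ => f (p.1, p.2 + t))) 0

/-- The squared norm of the gradient of `f : ℝ × ℝ → ℝ` at `p`. -/
noncomputable def gradSq (f : ℝ × ℝ → ℝ) (p : ℝ × ℝ) : ℝ :=
  (deriv (fun t : ℝ => f (p.1 + t, p.2)) 0) ^ 2 +
  (deriv (fun t : ℝ => f (p.1, p.2 + t)) 0) ^ 2

/-- Key one-variable lemma. -/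
lemma key (f : ℝ → ℝ) (c : ℝ) (hf : ContDiffAt ℝ 2 f 0) :
    deriv (fun t => f t - c * f t ^ 2) 0 = deriv f 0 - 2 * c * f 0 * deriv f 0 ∧
    deriv (deriv (fun t => f t - c * f t ^ 2)) 0 =
      deriv (deriv f) 0 - 2 * c * (f 0 * deriv (deriv f) 0 + deriv f 0 ^ 2) := by
  obtain ⟨u, hu, hfu⟩ := hf.contDiffOn le_rfl (by simp)
  obtain ⟨w, hw, hwo, hfw⟩ : ∃ w ⊆ u, IsOpen w ∧ (0:ℝ) ∈ w := by
    rcases mem_nhds_iff.1 hu with ⟨w, h1, h2, h3⟩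
    exact ⟨w, h1, h2, h3⟩
  have hfw2 : ContDiffOn ℝ 2 f w := hfu.mono hw
  have hd : ∀ t ∈ w, DifferentiableAt ℝ f t := fun t ht =>
    (hfw2.differentiableOn (by norm_num)).differentiableAt (hwo.mem_nhds ht)
  have heq : ∀ t ∈ w, deriv (fun s => f s - c * f s ^ 2) t
      = deriv f t - 2 * c * f t * deriv f t := by
    intro t ht
    have h1 : HasDerivAt f (deriv f t) t := (hd t ht).hasDerivAt
    have h2 : HasDerivAt (fun s => f s - c * f s ^ 2)
        (deriv f t - c * (2 * f t ^ 1 * deriv f t)) t :=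
      h1.sub ((h1.pow 2).const_mul c)
    rw [h2.deriv]; ring
  have hev : deriv (fun s => f s - c * f s ^ 2) =ᶠ[nhds 0]
      fun t => deriv f t - 2 * c * f t * deriv f t :=
    Filter.eventually_iff_exists_mem.2 ⟨w, hwo.mem_nhds hfw, heq⟩
  have hd2 : DifferentiableAt ℝ (deriv f) 0 := by
    have := (hfw2.deriv_of_isOpen hwo (by norm_num)).differentiableOn (n := 1) (by norm_num)
    exact this.differentiableAt (hwo.mem_nhds hfw)
  constructor
  · rw [heq 0 hfw]
  · rw [hev.deriv_eq]
    have h1 : HasDerivAt f (deriv f 0) 0 := (hd 0 hfw).hasDerivAt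
    have h2 : HasDerivAt (deriv f) (deriv (deriv f) 0) 0 := hd2.hasDerivAt
    have h3 : HasDerivAt (fun t => deriv f t - 2 * c * f t * deriv f t)
        (deriv (deriv f) 0 - (2 * c * deriv f 0 * deriv f 0 + 2 * c * f 0 * deriv (deriv f) 0)) 0 := by
      have := h2.sub (((h1.const_mul (2*c)).mul h2))
      exact this
    rw [h3.deriv]; ring

/-- if `h` is `C²` on an open set `Ω ⊆ ℝ²` with `Δh = 2k·h` and
`0 ≤ h ≤ 4/(k−2)`, then `v := h − ((k−2)/2)h²` satisfies
`Δv − 2k·v + k(k−2)v² ≤ 0` on `Ω`, together with the identity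
`Δv − 2k·v + k(k−2)v² = −k(k−2)²h³ + (1/4)k(k−2)³h⁴ − (k−2)|∇h|²`. -/
theorem stmt1 (k : ℕ) (hk : 3 ≤ k) (Ω : Set (ℝ × ℝ)) (hΩ : IsOpen Ω)
    (h : ℝ × ℝ → ℝ) (hreg : ContDiffOn ℝ 2 h Ω)
    (hlap : ∀ p ∈ Ω, lap2 h p = 2 * (k : ℝ) * h p)
    (hbd : ∀ p ∈ Ω, 0 ≤ h p ∧ h p ≤ 4 / ((k : ℝ) - 2))
    (v : ℝ × ℝ → ℝ) (hv : ∀ p, v p = h p - (((k : ℝ) - 2) / 2) * h p ^ 2) :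
    ∀ p ∈ Ω,
      (lap2 v p - 2 * (k : ℝ) * v p + (k : ℝ) * ((k : ℝ) - 2) * v p ^ 2 ≤ 0) ∧
      (lap2 v p - 2 * (k : ℝ) * v p + (k : ℝ) * ((k : ℝ) - 2) * v p ^ 2 =
        -(k : ℝ) * ((k : ℝ) - 2) ^ 2 * h p ^ 3
          + (1 / 4) * (k : ℝ) * ((k : ℝ) - 2) ^ 3 * h p ^ 4
          - ((k : ℝ) - 2) * gradSq h p) := by
  intro p hp
  set c : ℝ := ((k : ℝ) - 2) / 2 with hc
  have hkr : (3 : ℝ) ≤ (k : ℝ) := by exact_mod_cast hk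
  have hhp : ContDiffAt ℝ 2 h p := hreg.contDiffAt (hΩ.mem_nhds hp)
  set f1 : ℝ → ℝ := fun t => h (p.1 + t, p.2) with hf1
  set f2 : ℝ → ℝ := fun t => h (p.1, p.2 + t) with hf2
  have hc1 : ContDiffAt ℝ 2 f1 0 := by
    have hL : ContDiff ℝ 2 (fun t : ℝ => (p.1 + t, p.2)) :=
      (contDiff_const.add contDiff_id).prodMk contDiff_const
    have : ContDiffAt ℝ 2 (h ∘ fun t : ℝ => (p.1 + t, p.2)) 0 := by
      apply ContDiffAt.comp
      · simpa using hhp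
      · exact hL.contDiffAt
    exact this
  have hc2 : ContDiffAt ℝ 2 f2 0 := by
    have hL : ContDiff ℝ 2 (fun t : ℝ => (p.1, p.2 + t)) :=
      contDiff_const.prodMk (contDiff_const.add contDiff_id)
    have : ContDiffAt ℝ 2 (h ∘ fun t : ℝ => (p.1, p.2 + t)) 0 := by
      apply ContDiffAt.comp
      · simpa using hhp
      · exact hL.contDiffAt
    exact this
  have hv1 : (fun t : ℝ => v (p.1 + t, p.2)) = fun t => f1 t - c * f1 t ^ 2 := by
    funext t; simp only [hv, hf1]
  have hv2 : (fun t : ℝ => v (p.1, p.2 + t)) = fun t => f2 t - c * f2 t ^ 2 := by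
    funext t; simp only [hv, hf2]
  obtain ⟨hk1a, hk1b⟩ := key f1 c hc1
  obtain ⟨hk2a, hk2b⟩ := key f2 c hc2
  have hf10 : f1 0 = h p := by simp [hf1]
  have hf20 : f2 0 = h p := by simp [hf2]
  have hlapv : lap2 v p = (1 - 2 * c * h p) * lap2 h p - 2 * c * gradSq h p := by
    rw [lap2, lap2, gradSq, hv1, hv2, hk1b, hk2b, hf10, hf20]
    ring
  have hlaph := hlap p hp
  obtain ⟨hb0, hb4⟩ := hbd p hp
  have hvp : v p = h p - c * h p ^ 2 := hv p
  have hgs : 0 ≤ gradSq h p := by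
    rw [gradSq]; positivity
  have hid : lap2 v p - 2 * (k : ℝ) * v p + (k : ℝ) * ((k : ℝ) - 2) * v p ^ 2 =
      -(k : ℝ) * ((k : ℝ) - 2) ^ 2 * h p ^ 3
        + (1 / 4) * (k : ℝ) * ((k : ℝ) - 2) ^ 3 * h p ^ 4
        - ((k : ℝ) - 2) * gradSq h p := by
    rw [hlapv, hlaph, hvp, hc]; ring
  refine ⟨?_, hid⟩
  rw [hid]
  have hk2 : (1 : ℝ) ≤ (k : ℝ) - 2 := by linarith
  have hub : ((k : ℝ) - 2) * h p ≤ 4 := by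
    have hpos : (0:ℝ) < (k:ℝ) - 2 := by linarith
    have := (le_div_iff₀ hpos).1 hb4
    linarith
  have hA : (0:ℝ) ≤ (k:ℝ) * ((k:ℝ) - 2)^2 * h p ^ 3 := by positivity
  have hB : (((k:ℝ) - 2) * h p - 4) * ((k:ℝ) * ((k:ℝ) - 2)^2 * h p ^ 3) ≤ 0 :=
    mul_nonpos_of_nonpos_of_nonneg (by linarith) hA
  have hC : (0:ℝ) ≤ ((k:ℝ) - 2) * gradSq h p := mul_nonneg (by linarith) hgs
  nlinarith [hB, hC]
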